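/- Let G be a connected bipartite graph with bipartition V_1, V_2. If G is 2-γ'_MB-critical, then either G is isomorphic to K_{2,m} for some m ≥ 3, or |V_1| ≥ 3 and |V_2| ≥ 3, each V_i contains exactly two bipartite dominating vertices, and every vertex of G other than these four bipartite dominating vertices has degree exactly 2. -/

import Mathlib

/-!
Maker–Breaker domination game.  The players Dominator and Staller alternately select
previously unselected vertices of a graph `G`.  Dominator wins if at some point his selected
vertices form a dominating set of `G`; Staller wins if she selects all vertices of the closed
neighbourhood of some vertex.  Below, `D` always denotes the set of vertices selected by
Dominator so far and `S` the set selected by Staller.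
-/

namespace MBD

variable {V : Type*}

/-- `D` is a dominating set of `G`. -/
def IsDomSet (G : SimpleGraph V) (D : Set V) : Prop :=
  ∀ v, v ∈ D ∨ ∃ u ∈ D, G.Adj u v

/-- Dominator is to move.  `DWin G k D S` says that Dominator has a strategy guaranteeing
that his selected set becomes a dominating set of `G` after at most `k` further moves of his
(the game ends when all vertices have been selected). -/
def DWin (G : SimpleGraph V) : ℕ → Set V → Set V → Prop
  | 0, D, _ => IsDomSet G D
  | (k+1), D, S => IsDomSet G D ∨
      ∃ v ∉ D ∪ S,
        (IsDomSet G (insert v D) ∨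
          ((∃ w, w ∉ insert v D ∪ S) ∧
            ∀ w ∉ insert v D ∪ S, DWin G k (insert v D) (insert w S)))

/-- Staller is to move, and Dominator can win using at most `k` further moves of his. -/
def DWinS (G : SimpleGraph V) (k : ℕ) (D S : Set V) : Prop :=
  IsDomSet G D ∨
    ((∃ w, w ∉ D ∪ S) ∧ ∀ w ∉ D ∪ S, DWin G k D (insert w S))

/-- The Maker–Breaker domination number `γ_MB` of `G`: the least `k` such that Dominator,
moving first (D-game), can win within at most `k` of his moves; `∞` if he cannot win. -/
noncomputable def gammaMB (G : SimpleGraph V) : ℕ∞ :=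
  sInf (Nat.cast '' {k : ℕ | DWin G k ∅ ∅})

/-- The Maker–Breaker domination number `γ'_MB` of `G`: the least `k` such that Dominator
can win within at most `k` of his moves in the S-game (Staller moves first); `∞` if he
cannot win. -/
noncomputable def gammaMB' (G : SimpleGraph V) : ℕ∞ :=
  sInf (Nat.cast '' {k : ℕ | DWinS G k ∅ ∅})

/-- Staller has won: she has selected all vertices of the closed neighbourhood `N[v]`
of some vertex `v`. -/
def IsStallerWin (G : SimpleGraph V) (S : Set V) : Prop :=
  ∃ v, v ∈ S ∧ ∀ u, G.Adj v u → u ∈ S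

/-- Staller is to move.  `SWin G k D S` says Staller has a strategy to win using at most `k`
further moves of hers. -/
def SWin (G : SimpleGraph V) : ℕ → Set V → Set V → Prop
  | 0, _, S => IsStallerWin G S
  | (k+1), D, S => IsStallerWin G S ∨
      ∃ v ∉ D ∪ S,
        (IsStallerWin G (insert v S) ∨
          ((∃ w, w ∉ D ∪ insert v S) ∧
            ∀ w ∉ D ∪ insert v S, SWin G k (insert w D) (insert v S)))

/-- Dominator is to move, and Staller can win within at most `k` further moves of hers. -/
def SWinD (G : SimpleGraph V) (k : ℕ) (D S : Set V) : Prop :=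
  IsStallerWin G S ∨
    ((∃ w, w ∉ D ∪ S) ∧ ∀ w ∉ D ∪ S, SWin G k (insert w D) S)

/-- The Staller-Maker–Breaker domination number `γ_SMB` of `G`: the least `k` such that
Staller can win within at most `k` of her moves in the D-game (Dominator starts);
`∞` if she cannot win. -/
noncomputable def gammaSMB (G : SimpleGraph V) : ℕ∞ :=
  sInf (Nat.cast '' {k : ℕ | SWinD G k ∅ ∅})

/-- The Staller-Maker–Breaker domination number `γ'_SMB` of `G`: the least `k` such that
Staller can win within at most `k` of her moves in the S-game (Staller starts);
`∞` if she cannot win. -/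
noncomputable def gammaSMB' (G : SimpleGraph V) : ℕ∞ :=
  sInf (Nat.cast '' {k : ℕ | SWin G k ∅ ∅})

end MBD

open MBD
section Aux
open MBD

variable {V : Type*}

lemma pairset (a b : V) : insert b (insert a (∅ : Set V)) = {a, b} := by
  ext x; simp [or_comm]

lemma dwin_succ (G : SimpleGraph V) (k : ℕ) (D S : Set V) :
    DWin G (k+1) D S ↔ (IsDomSet G D ∨
      ∃ v ∉ D ∪ S,
        (IsDomSet G (insert v D) ∨
          ((∃ w, w ∉ insert v D ∪ S) ∧
            ∀ w ∉ insert v D ∪ S, DWin G k (insert v D) (insert w S)))) := Iff.rfl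

lemma dwin_zero (G : SimpleGraph V) (D S : Set V) : DWin G 0 D S ↔ IsDomSet G D := Iff.rfl

lemma DWin.mono (G : SimpleGraph V) : ∀ (k : ℕ) (D S : Set V), DWin G k D S → DWin G (k+1) D S
  | 0, D, S, h => Or.inl h
  | (k+1), D, S, h =>
    h.imp id (fun ⟨v, hv, h⟩ => ⟨v, hv, h.imp id
      (fun ⟨he, ha⟩ => ⟨he, fun w hw => DWin.mono G k _ _ (ha w hw)⟩)⟩)

lemma DWinS.mono (G : SimpleGraph V) (k : ℕ) (D S : Set V) (h : DWinS G k D S) :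
    DWinS G (k+1) D S :=
  h.imp id (fun ⟨he, ha⟩ => ⟨he, fun w hw => DWin.mono G k _ _ (ha w hw)⟩)

lemma of_gamma_two {G : SimpleGraph V} (h : gammaMB' G = 2) :
    DWinS G 2 ∅ ∅ ∧ ¬ DWinS G 1 ∅ ∅ := by
  constructor
  · by_contra h2
    have hge : ∀ x ∈ Nat.cast '' {k : ℕ | DWinS G k ∅ ∅}, (3 : ℕ∞) ≤ x := by
      rintro x ⟨k, hk, rfl⟩
      by_contra hlt
      push_neg at hlt
      have hk3 : k < 3 := by exact_mod_cast hlt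
      interval_cases k
      · exact h2 (DWinS.mono _ _ _ _ (DWinS.mono _ _ _ _ hk))
      · exact h2 (DWinS.mono _ _ _ _ hk)
      · exact h2 hk
    have h3 := le_sInf hge
    rw [gammaMB'] at h
    rw [h] at h3
    norm_num at h3
  · intro h1
    have : gammaMB' G ≤ 1 := sInf_le ⟨1, h1, rfl⟩
    rw [h] at this
    norm_num at this

lemma gamma_le_two {G : SimpleGraph V} (h : DWinS G 2 ∅ ∅) : gammaMB' G ≤ 2 :=
  sInf_le ⟨2, h, rfl⟩

/-- The key condition equivalent to `DWinS G 2 ∅ ∅`. -/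
def Cond (G : SimpleGraph V) : Prop :=
  ∀ w : V, ∃ v, v ≠ w ∧ ∃ p q, p ≠ q ∧ p ≠ v ∧ p ≠ w ∧ q ≠ v ∧ q ≠ w ∧
    IsDomSet G {v, p} ∧ IsDomSet G {v, q}

lemma exists_third [Fintype V] (h3 : 3 ≤ Fintype.card V) (v w : V) :
    ∃ t, t ≠ v ∧ t ≠ w := by
  classical
  by_contra h
  push_neg at h
  have hsub : (Finset.univ : Finset V) ⊆ {v, w} := by
    intro x _
    by_cases hx : x = v
    · simp [hx]
    · simp [h x hx]
  have := Finset.card_le_card hsub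
  have h2 : ({v, w} : Finset V).card ≤ 2 :=
    (Finset.card_insert_le _ _).trans (by simp)
  rw [Finset.card_univ] at this
  omega

lemma cond_to_dwins [Fintype V] {G : SimpleGraph V} (hne : Nonempty V)
    (h3 : 3 ≤ Fintype.card V) (hC : Cond G) : DWinS G 2 ∅ ∅ := by
  refine Or.inr ⟨⟨hne.some, by simp⟩, fun w _ => ?_⟩
  obtain ⟨v, hvw, p, q, hpq, hpv, hpw, hqv, hqw, hdp, hdq⟩ := hC w
  refine Or.inr ⟨v, by simp [hvw], Or.inr ⟨?_, ?_⟩⟩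
  · obtain ⟨t, ht1, ht2⟩ := exists_third h3 v w
    exact ⟨t, by simp [ht1, ht2]⟩
  · intro w2 hw2
    by_cases hp : p = w2
    · have hqw2 : q ≠ w2 := fun h => hpq (by rw [hp, ← h])
      refine Or.inr ⟨q, by simp [hqv, hqw, hqw2], Or.inl ?_⟩
      rwa [pairset]
    · refine Or.inr ⟨p, by simp [hpv, hpw, hp], Or.inl ?_⟩
      rwa [pairset]

lemma dwins_to_cond [Fintype V] {G : SimpleGraph V}
    (h3 : 3 ≤ Fintype.card V) (hnd : ∀ v : V, ¬ IsDomSet G {v}) (hne : Nonempty V)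
    (h : DWinS G 2 ∅ ∅) : Cond G := by
  intro w
  have hnes : ¬ IsDomSet G (∅ : Set V) := by
    intro hd; rcases hd hne.some with h | ⟨u, hu, _⟩ <;> simp_all
  rcases h with h | ⟨_, hall⟩
  · exact absurd h hnes
  have h2 := hall w (by simp)
  rcases h2 with h2 | ⟨v, hv, h2⟩
  · exact absurd h2 hnes
  have hvw : v ≠ w := by simpa using hv
  have hnd' : ¬ IsDomSet G (insert v ∅) := by
    rw [show insert v (∅ : Set V) = {v} by simp]
    exact hnd v
  rcases h2 with h2 | ⟨_, hall2⟩
  · exact absurd h2 hnd'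
  have key : ∀ t, t ≠ v → t ≠ w → ∃ p, p ≠ v ∧ p ≠ w ∧ p ≠ t ∧ IsDomSet G {v, p} := by
    intro t ht1 ht2
    have h3' := hall2 t (by simp [ht1, ht2])
    rcases h3' with h3' | ⟨v2, hv2, h3'⟩
    · exact absurd h3' hnd'
    have hv2' : ¬v2 = t ∧ ¬v2 = w ∧ ¬v2 = v := by simpa [not_or] using hv2
    have hdom : IsDomSet G (insert v2 (insert v ∅)) := by
      rcases h3' with h3' | ⟨⟨w3, hw3⟩, hall3⟩
      · exact h3'
      · exact hall3 w3 hw3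
    exact ⟨v2, hv2'.2.2, hv2'.2.1, hv2'.1, by rwa [pairset] at hdom⟩
  obtain ⟨t0, ht0v, ht0w⟩ := exists_third h3 v w
  obtain ⟨p, hpv, hpw, _, hdp⟩ := key t0 ht0v ht0w
  obtain ⟨q, hqv, hqw, hqp, hdq⟩ := key p hpv hpw
  exact ⟨v, hvw, p, q, fun h => hqp h.symm, hpv, hpw, hqv, hqw, hdp, hdq⟩

end Aux
section Bip
open MBD

variable {V : Type*} {G : SimpleGraph V} {S T : Set V}

lemma mem2 (hpart : S ∪ T = Set.univ) (x : V) : x ∈ S ∨ x ∈ T := by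
  have hx : x ∈ S ∪ T := hpart ▸ Set.mem_univ x
  exact hx

lemma noadj_same (hdisj : Disjoint S T)
    (hbip : ∀ u v, G.Adj u v → (u ∈ S ∧ v ∈ T) ∨ (u ∈ T ∧ v ∈ S))
    {x y : V} (hx : x ∈ S) (hy : y ∈ S) : ¬ G.Adj x y := by
  intro h
  rcases hbip x y h with ⟨_, h2⟩ | ⟨h1, _⟩
  · exact Set.disjoint_left.mp hdisj hy h2
  · exact Set.disjoint_left.mp hdisj hx h1

lemma adj_memT (hdisj : Disjoint S T)
    (hbip : ∀ u v, G.Adj u v → (u ∈ S ∧ v ∈ T) ∨ (u ∈ T ∧ v ∈ S))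
    {x y : V} (hx : x ∈ S) (h : G.Adj x y) : y ∈ T := by
  rcases hbip x y h with ⟨_, h2⟩ | ⟨h1, _⟩
  · exact h2
  · exact absurd h1 (fun h1 => Set.disjoint_left.mp hdisj hx h1)

lemma bip_symm (hbip : ∀ u v, G.Adj u v → (u ∈ S ∧ v ∈ T) ∨ (u ∈ T ∧ v ∈ S)) :
    ∀ u v, G.Adj u v → (u ∈ T ∧ v ∈ S) ∨ (u ∈ S ∧ v ∈ T) :=
  fun u v h => (hbip u v h).symm

lemma walk_closed {S' : Set V} (hcl : ∀ x ∈ S', ∀ y, G.Adj x y → y ∈ S') :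
    ∀ {u v : V}, G.Walk u v → u ∈ S' → v ∈ S' := by
  intro u v p
  induction p with
  | nil => exact id
  | cons h _ ih => exact fun hu => ih (hcl _ hu _ h)

lemma exists_adj [Fintype V] (hconn : G.Connected) (hcard : 2 ≤ Fintype.card V) (x : V) :
    ∃ y, G.Adj x y := by
  obtain ⟨y, hy⟩ := Fintype.exists_ne_of_one_lt_card (by omega) x
  obtain ⟨p⟩ := hconn.preconnected x y
  cases p with
  | nil => exact absurd rfl hy
  | cons h _ => exact ⟨_, h⟩

lemma dom_pair_opp (hpart : S ∪ T = Set.univ) (hdisj : Disjoint S T)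
    (hbip : ∀ u v, G.Adj u v → (u ∈ S ∧ v ∈ T) ∨ (u ∈ T ∧ v ∈ S))
    (hS3 : 3 ≤ S.ncard)
    {v p : V} (hdom : IsDomSet G {v, p}) (hv : v ∈ S) : p ∈ T := by
  rcases mem2 hpart p with hp | hp
  · exfalso
    have hsub : ¬ S ⊆ {v, p} := by
      intro hsub
      have h1 := Set.ncard_le_ncard hsub (Set.toFinite _)
      have h2 : ({v, p} : Set V).ncard ≤ 2 :=
        (Set.ncard_insert_le _ _).trans (by simp)
      omega
    obtain ⟨z, hz, hz2⟩ := Set.not_subset.mp hsub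
    rcases hdom z with hz' | ⟨u, hu, hadj⟩
    · exact hz2 hz'
    · rcases hu with hu | hu
      · exact noadj_same hdisj hbip (hu ▸ hv) hz hadj
      · exact noadj_same hdisj hbip (hu ▸ hp) hz hadj
  · exact hp

lemma dom_pair_cover (hdisj : Disjoint S T)
    (hbip : ∀ u v, G.Adj u v → (u ∈ S ∧ v ∈ T) ∨ (u ∈ T ∧ v ∈ S))
    {v p : V} (hdom : IsDomSet G {v, p}) (hv : v ∈ S) (hp : p ∈ T) :
    ∀ z ∈ T, z ≠ p → G.Adj v z := by
  intro z hz hzp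
  rcases hdom z with hz' | ⟨u, hu, hadj⟩
  · rcases hz' with h | h
    · exact absurd (h ▸ hz) (fun hh => Set.disjoint_left.mp hdisj hv hh)
    · exact absurd h hzp
  · rcases hu with hu | hu
    · exact hu ▸ hadj
    · exact absurd hadj (noadj_same hdisj.symm (bip_symm hbip) (hu ▸ hp) hz)

lemma rich_struct (hpart : S ∪ T = Set.univ) (hdisj : Disjoint S T)
    (hbip : ∀ u v, G.Adj u v → (u ∈ S ∧ v ∈ T) ∨ (u ∈ T ∧ v ∈ S))
    (hS3 : 3 ≤ S.ncard) (hT3 : 3 ≤ T.ncard)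
    {v p q : V} (hv : v ∈ S) (hpq : p ≠ q)
    (hdp : IsDomSet G {v, p}) (hdq : IsDomSet G {v, q}) :
    (∀ y ∈ T, G.Adj v y) ∧ p ∈ T ∧ q ∈ T ∧
      (∀ z ∈ S, G.Adj p z) ∧ (∀ z ∈ S, G.Adj q z) := by
  have hp : p ∈ T := dom_pair_opp hpart hdisj hbip hS3 hdp hv
  have hq : q ∈ T := dom_pair_opp hpart hdisj hbip hS3 hdq hv
  have hvT : ∀ y ∈ T, G.Adj v y := by
    intro y hy
    by_cases hyp : y = p
    · exact dom_pair_cover hdisj hbip hdq hv hq y hy (hyp ▸ hpq)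
    · exact dom_pair_cover hdisj hbip hdp hv hp y hy hyp
  have cover2 : ∀ r : V, r ∈ T → IsDomSet G {v, r} → ∀ z ∈ S, G.Adj r z := by
    intro r hr hdom z hz
    by_cases hzv : z = v
    · exact hzv ▸ (hvT r hr).symm
    · have hdom' : IsDomSet G {r, v} := by rwa [Set.pair_comm]
      exact dom_pair_cover hdisj.symm (bip_symm hbip) hdom' hr hv z hz hzv
  exact ⟨hvT, hp, hq, cover2 p hp hdp, cover2 q hq hdq⟩

lemma dom_AB (hpart : S ∪ T = Set.univ) {x y : V}
    (hax : ∀ z ∈ T, G.Adj x z) (hay : ∀ z ∈ S, G.Adj y z) : IsDomSet G {x, y} := by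
  intro z
  rcases mem2 hpart z with hz | hz
  · exact Or.inr ⟨y, by simp, hay z hz⟩
  · exact Or.inr ⟨x, by simp, hax z hz⟩

lemma dom_AB_del (hpart : S ∪ T = Set.univ) {x y c d : V}
    (hax : ∀ z ∈ T, G.Adj x z) (hay : ∀ z ∈ S, G.Adj y z)
    (hxc : x ≠ c) (hxd : x ≠ d) (hyc : y ≠ c) (hyd : y ≠ d) :
    IsDomSet (G.deleteEdges {s(c, d)}) {x, y} := by
  intro z
  rcases mem2 hpart z with hz | hz
  · refine Or.inr ⟨y, by simp, ?_⟩
    rw [SimpleGraph.deleteEdges_adj]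
    refine ⟨hay z hz, ?_⟩
    simp only [Set.mem_singleton_iff, Sym2.eq_iff, not_or]
    exact ⟨fun h => hyc h.1, fun h => hyd h.1⟩
  · refine Or.inr ⟨x, by simp, ?_⟩
    rw [SimpleGraph.deleteEdges_adj]
    refine ⟨hax z hz, ?_⟩
    simp only [Set.mem_singleton_iff, Sym2.eq_iff, not_or]
    exact ⟨fun h => hxc h.1, fun h => hxd h.1⟩

lemma cond_of_four {H : SimpleGraph V} {x1 x2 y1 y2 : V}
    (hx : x1 ≠ x2) (hy : y1 ≠ y2)
    (h11 : x1 ≠ y1) (h12 : x1 ≠ y2) (h21 : x2 ≠ y1) (h22 : x2 ≠ y2)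
    (d11 : IsDomSet H {x1, y1}) (d12 : IsDomSet H {x1, y2})
    (d21 : IsDomSet H {x2, y1}) (d22 : IsDomSet H {x2, y2}) : Cond H := by
  intro w
  by_cases hw1 : w = x1
  · subst hw1
    exact ⟨x2, hx.symm, y1, y2, hy, h21.symm, h11.symm, h22.symm, h12.symm, d21, d22⟩
  by_cases hw2 : w = x2
  · subst hw2
    exact ⟨x1, hx, y1, y2, hy, h11.symm, h21.symm, h12.symm, h22.symm, d11, d12⟩
  by_cases hw3 : w = y1
  · subst hw3
    refine ⟨y2, hy.symm, x1, x2, hx, h12, h11, h22, h21, ?_, ?_⟩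
    · rwa [Set.pair_comm]
    · rwa [Set.pair_comm]
  by_cases hw4 : w = y2
  · subst hw4
    refine ⟨y1, hy, x1, x2, hx, h11, h12, h21, h22, ?_, ?_⟩
    · rwa [Set.pair_comm]
    · rwa [Set.pair_comm]
  · exact ⟨x1, fun h => hw1 h.symm, y1, y2, hy, h11.symm, fun h => hw3 h.symm,
      h12.symm, fun h => hw4 h.symm, d11, d12⟩

end Bip
section Sides
open MBD

variable {V : Type*} [Fintype V] {G : SimpleGraph V} {S T : Set V}

lemma no_single_dom (hpart : S ∪ T = Set.univ) (hdisj : Disjoint S T)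
    (hbip : ∀ u v, G.Adj u v → (u ∈ S ∧ v ∈ T) ∨ (u ∈ T ∧ v ∈ S))
    (hS2 : 2 ≤ S.ncard) (hT2 : 2 ≤ T.ncard) (v : V) : ¬ IsDomSet G {v} := by
  intro hd
  have key : ∀ (S' T' : Set V), Disjoint S' T' →
      (∀ u w, G.Adj u w → (u ∈ S' ∧ w ∈ T') ∨ (u ∈ T' ∧ w ∈ S')) →
      2 ≤ S'.ncard → v ∈ S' → False := by
    intro S' T' hdisj' hbip' h2 hv
    have hns : ¬ S' ⊆ {v} := by
      intro hsub
      have := Set.ncard_le_ncard hsub (Set.toFinite _)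
      rw [Set.ncard_singleton] at this
      omega
    obtain ⟨x, hx, hxv⟩ := Set.not_subset.mp hns
    rcases hd x with h | ⟨u, hu, hadj⟩
    · exact hxv h
    · have huv : u = v := hu
      exact noadj_same hdisj' hbip' (huv ▸ hv) hx (huv ▸ hadj)
  rcases mem2 hpart v with hv | hv
  · exact key S T hdisj hbip hS2 hv
  · exact key T S hdisj.symm (bip_symm hbip) hT2 hv

lemma side_ge2 (hconn : G.Connected) (hpart : S ∪ T = Set.univ) (hdisj : Disjoint S T)
    (hbip : ∀ u v, G.Adj u v → (u ∈ S ∧ v ∈ T) ∨ (u ∈ T ∧ v ∈ S))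
    (hwin : DWinS G 2 ∅ ∅) (hno1 : ¬ DWinS G 1 ∅ ∅) : 2 ≤ S.ncard := by
  by_contra hlt
  push_neg at hlt
  have hne : Nonempty V := hconn.nonempty
  have hnesd : ¬ IsDomSet G (∅ : Set V) := by
    intro hd; rcases hd hne.some with h | ⟨u, hu, _⟩ <;> simp_all
  have hcard1 : Fintype.card V = 1 → False := by
    intro h1
    obtain ⟨v0, hv0⟩ := Fintype.card_eq_one_iff.mp h1
    rcases hwin with h | ⟨_, hall⟩
    · exact hnesd h
    · have h2 := hall v0 (by simp)
      rcases h2 with h | ⟨v, hv, _⟩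
      · exact hnesd h
      · have hvv : v = v0 := hv0 v
        simp [hvv] at hv
  have hS01 : S.ncard = 0 ∨ S.ncard = 1 := by omega
  rcases hS01 with hS0 | hS1
  · -- S empty
    have hSe : S = ∅ := (Set.ncard_eq_zero (Set.toFinite _)).mp hS0
    by_cases hc : 2 ≤ Fintype.card V
    · obtain ⟨y, hy⟩ := exists_adj hconn hc hne.some
      rcases hbip _ _ hy with ⟨h1, _⟩ | ⟨_, h1⟩ <;> simp [hSe] at h1
    · have : Fintype.card V = 1 := by
        have := Fintype.card_pos_iff.mpr hne
        omega
      exact hcard1 this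
  · obtain ⟨a, hSa⟩ := (Set.ncard_eq_one).mp hS1
    subst hSa
    have hT012 : T.ncard = 0 ∨ T.ncard = 1 ∨ 2 ≤ T.ncard := by omega
    rcases hT012 with hT0 | hT1 | hT2
    · have hTe : T = ∅ := (Set.ncard_eq_zero (Set.toFinite _)).mp hT0
      apply hcard1
      have : (Set.univ : Set V).ncard = 1 := by
        rw [← hpart, hTe]
        simp
      rwa [Set.ncard_univ, Nat.card_eq_fintype_card] at this
    · obtain ⟨y, hTy⟩ := (Set.ncard_eq_one).mp hT1
      subst hTy
      have hay : a ≠ y := by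
        intro h
        have h1 : a ∈ ({y} : Set V) := by simp [h]
        exact Set.disjoint_left.mp hdisj (Set.mem_singleton a) h1
      have hc2 : 2 ≤ Fintype.card V := Fintype.one_lt_card_iff.mpr ⟨a, y, hay⟩
      obtain ⟨z, hz⟩ := exists_adj hconn hc2 a
      have hzy : z = y := by
        rcases mem2 hpart z with h | h
        · exact absurd (show z = a from h) hz.ne'
        · exact h
      have hadj : G.Adj a y := hzy ▸ hz
      apply hno1
      refine Or.inr ⟨⟨a, by simp⟩, fun w _ => ?_⟩
      rcases mem2 hpart w with hw | hw
      · have hwa : w = a := hw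
        refine Or.inr ⟨y, by simp [hwa, hay.symm], Or.inl ?_⟩
        intro z
        rcases mem2 hpart z with h | h
        · have : z = a := h
          exact Or.inr ⟨y, by simp, this ▸ hadj.symm⟩
        · have : z = y := h
          exact Or.inl (by simp [this])
      · have hwy : w = y := hw
        refine Or.inr ⟨a, by simp [hwy, hay], Or.inl ?_⟩
        intro z
        rcases mem2 hpart z with h | h
        · have : z = a := h
          exact Or.inl (by simp [this])
        · have : z = y := h
          exact Or.inr ⟨a, by simp, this ▸ hadj⟩
    · -- T.ncard ≥ 2 : the star refutation
      have hcV : 2 ≤ Fintype.card V := by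
        have h1 : T.ncard ≤ (Set.univ : Set V).ncard :=
          Set.ncard_le_ncard (Set.subset_univ _) (Set.toFinite _)
        rw [Set.ncard_univ, Nat.card_eq_fintype_card] at h1
        omega
      have hta : ∀ t ∈ T, G.Adj t a := by
        intro t ht
        obtain ⟨u, hu⟩ := exists_adj hconn hcV t
        rcases mem2 hpart u with h | h
        · exact (show u = a from h) ▸ hu
        · exact absurd hu (noadj_same hdisj.symm (bip_symm hbip) ht h)
      have haS : a ∈ ({a} : Set V) := by simp
      rcases hwin with h | ⟨_, hall⟩
      · exact hnesd h
      have h2 := hall a (by simp)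
      rcases h2 with h | ⟨v, hv, hcase⟩
      · exact hnesd h
      have hva : v ≠ a := by simpa using hv
      have hvT : v ∈ T := by
        rcases mem2 hpart v with h | h
        · exact absurd (show v = a from h) hva
        · exact h
      obtain ⟨t2, ht2T, ht2v⟩ : ∃ t2 ∈ T, t2 ∉ ({v} : Set V) := by
        apply Set.not_subset.mp
        intro hsub
        have := Set.ncard_le_ncard hsub (Set.toFinite _)
        rw [Set.ncard_singleton] at this
        omega
      have ht2v' : t2 ≠ v := by simpa using ht2v
      have ht2a : t2 ≠ a := by
        intro h
        exact Set.disjoint_left.mp hdisj (h ▸ haS) ht2T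
      have hnd1 : ¬ IsDomSet G (insert v ∅) := by
        intro hd
        rcases hd t2 with h | ⟨u, hu, hadj⟩
        · simp at h; exact ht2v' h
        · have huv : u = v := by simpa using hu
          exact noadj_same hdisj.symm (bip_symm hbip) (huv ▸ hvT) ht2T (huv ▸ hadj)
      rcases hcase with h | ⟨_, hall2⟩
      · exact hnd1 h
      have h3 := hall2 t2 (by simp [ht2v', ht2a])
      rcases h3 with h3 | ⟨v2, hv2, hcase2⟩
      · exact hnd1 h3
      have hv2'' : ¬v2 = t2 ∧ ¬v2 = a ∧ ¬v2 = v := by simpa [not_or] using hv2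
      have hv2' : ¬v2 = v ∧ ¬v2 = t2 ∧ ¬v2 = a := ⟨hv2''.2.2, hv2''.1, hv2''.2.1⟩
      have hv2T : v2 ∈ T := by
        rcases mem2 hpart v2 with h | h
        · exact absurd (show v2 = a from h) hv2'.2.2
        · exact h
      have hdom2 : IsDomSet G (insert v2 (insert v ∅)) := by
        rcases hcase2 with h | ⟨⟨w3, hw3⟩, hall3⟩
        · exact h
        · exact hall3 w3 hw3
      by_cases hT3 : 3 ≤ T.ncard
      · obtain ⟨t3, ht3, ht3'⟩ : ∃ t3 ∈ T, t3 ∉ ({v, v2} : Set V) := by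
          apply Set.not_subset.mp
          intro hsub
          have h1 := Set.ncard_le_ncard hsub (Set.toFinite _)
          have h2 : ({v, v2} : Set V).ncard ≤ 2 :=
            (Set.ncard_insert_le _ _).trans (by simp)
          omega
        simp only [Set.mem_insert_iff, Set.mem_singleton_iff, not_or] at ht3'
        rcases hdom2 t3 with h | ⟨u, hu, hadj⟩
        · simp only [Set.mem_insert_iff, Set.mem_empty_iff_false, or_false] at h
          rcases h with h | h
          · exact ht3'.2 h
          · exact ht3'.1 h
        · have huT : u ∈ T := by
            simp only [Set.mem_insert_iff, Set.mem_empty_iff_false, or_false] at hu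
            rcases hu with h | h
            · exact h ▸ hv2T
            · exact h ▸ hvT
          exact noadj_same hdisj.symm (bip_symm hbip) huT ht3 hadj
      · have hT2' : T.ncard = 2 := by omega
        have hsub : ({v, t2} : Set V) ⊆ T := by
          intro x hx
          rcases hx with h | h
          · exact h ▸ hvT
          · exact (show x = t2 from h) ▸ ht2T
        have hpair : ({v, t2} : Set V).ncard = 2 := Set.ncard_pair (fun h => ht2v' h.symm)
        have hTeq : ({v, t2} : Set V) = T :=
          Set.eq_of_subset_of_ncard_le hsub (by omega) (Set.toFinite _)
        have : v2 ∈ ({v, t2} : Set V) := hTeq ▸ hv2T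
        rcases this with h | h
        · exact hv2'.1 h
        · exact hv2'.2.1 h

end Sides
section Case2m
open MBD

variable {V : Type*} [Fintype V] {G : SimpleGraph V} {S T : Set V}

lemma pair_cross_force (hpart : S ∪ T = Set.univ) (hdisj : Disjoint S T)
    (hbip : ∀ u v, G.Adj u v → (u ∈ S ∧ v ∈ T) ∨ (u ∈ T ∧ v ∈ S))
    (hT3 : 3 ≤ T.ncard)
    {x b y0 : V} (hSeq : S = {x, b}) (hnadj : ¬ G.Adj x y0) (hy0 : y0 ∈ T)
    {v p : V} (hvp : v ≠ p) (hvb : v ≠ b) (hpb : p ≠ b)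
    (hdom : IsDomSet G {v, p}) : (v = x ∧ p = y0) ∨ (v = y0 ∧ p = x) := by
  have cross : ∀ v' p', v' ≠ b → v' ∈ S → p' ∈ T → IsDomSet G {v', p'} →
      v' = x ∧ p' = y0 := by
    intro v' p' hv'b hv' hp' hdom'
    have hvx : v' = x := by
      rcases (hSeq ▸ hv' : v' ∈ ({x, b} : Set V)) with h | h
      · exact h
      · exact absurd h hv'b
    refine ⟨hvx, ?_⟩
    by_cases hpy : p' = y0
    · exact hpy
    exfalso
    rcases hdom' y0 with h | ⟨u, hu, hadj⟩
    · rcases h with h | h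
      · exact Set.disjoint_left.mp hdisj hv' (h ▸ hy0)
      · exact hpy h.symm
    · rcases hu with hu | hu
      · exact hnadj (hvx ▸ hu ▸ hadj)
      · exact noadj_same hdisj.symm (bip_symm hbip) (hu ▸ hp') hy0 hadj
  rcases mem2 hpart v with hv | hv
  · rcases mem2 hpart p with hp | hp
    · exfalso
      have h1 : v = x := by
        rcases (hSeq ▸ hv : v ∈ ({x, b} : Set V)) with h | h
        · exact h
        · exact absurd h hvb
      have h2 : p = x := by
        rcases (hSeq ▸ hp : p ∈ ({x, b} : Set V)) with h | h
        · exact h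
        · exact absurd h hpb
      exact hvp (h1.trans h2.symm)
    · exact Or.inl (cross v p hvb hv hp hdom)
  · rcases mem2 hpart p with hp | hp
    · have h := cross p v hpb hp hv (by rwa [Set.pair_comm] at hdom)
      exact Or.inr ⟨h.2, h.1⟩
    · exfalso
      obtain ⟨z, hz, hz2⟩ : ∃ z ∈ T, z ∉ ({v, p} : Set V) := by
        apply Set.not_subset.mp
        intro hsub
        have h1 := Set.ncard_le_ncard hsub (Set.toFinite _)
        have h2 : ({v, p} : Set V).ncard ≤ 2 :=
          (Set.ncard_insert_le _ _).trans (by simp)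
        omega
      rcases hdom z with h | ⟨u, hu, hadj⟩
      · exact hz2 h
      · have huT : u ∈ T := by
          rcases hu with h | h
          · exact h ▸ hv
          · exact h ▸ hp
        exact noadj_same hdisj.symm (bip_symm hbip) huT hz hadj

lemma complete_of_two (hpart : S ∪ T = Set.univ) (hdisj : Disjoint S T)
    (hbip : ∀ u v, G.Adj u v → (u ∈ S ∧ v ∈ T) ∨ (u ∈ T ∧ v ∈ S))
    (hC : Cond G) (hS2 : S.ncard = 2) (hT3 : 3 ≤ T.ncard) :
    ∀ x ∈ S, ∀ y ∈ T, G.Adj x y := by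
  by_contra hcon
  push_neg at hcon
  obtain ⟨x, hx, y0, hy0, hnadj⟩ := hcon
  obtain ⟨a1, b1, hab, hSeq⟩ := Set.ncard_eq_two.mp hS2
  obtain ⟨b, hxb, hSeq'⟩ : ∃ b, x ≠ b ∧ S = {x, b} := by
    rcases (hSeq ▸ hx : x ∈ ({a1, b1} : Set V)) with h | h
    · exact ⟨b1, h ▸ hab, by rw [hSeq, h]⟩
    · have hxb1 : x = b1 := h
      exact ⟨a1, fun hh => hab (hh.symm.trans hxb1), by rw [hSeq, hxb1, Set.pair_comm]⟩
  obtain ⟨v, hvb, p, q, hpq, hpv, hpb, hqv, hqb, hdp, hdq⟩ := hC b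
  have hxy0 : x ≠ y0 := fun h => Set.disjoint_left.mp hdisj hx (h ▸ hy0)
  have h1 := pair_cross_force hpart hdisj hbip hT3 hSeq' hnadj hy0
    (fun h => hpv h.symm) hvb hpb hdp
  have h2 := pair_cross_force hpart hdisj hbip hT3 hSeq' hnadj hy0
    (fun h => hqv h.symm) hvb hqb hdq
  rcases h1 with ⟨hv1, hp1⟩ | ⟨hv1, hp1⟩ <;> rcases h2 with ⟨hv2, hq1⟩ | ⟨hv2, hq1⟩
  · exact hpq (hp1.trans hq1.symm)
  · exact hxy0 (hv1.symm.trans hv2)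
  · exact hxy0 (hv2.symm.trans hv1)
  · exact hpq (hp1.trans hq1.symm)

lemma iso_complete (hpart : S ∪ T = Set.univ) (hdisj : Disjoint S T)
    (hbip : ∀ u v, G.Adj u v → (u ∈ S ∧ v ∈ T) ∨ (u ∈ T ∧ v ∈ S))
    (hcomp : ∀ x ∈ S, ∀ y ∈ T, G.Adj x y) (hS2 : S.ncard = 2) :
    Nonempty (G ≃g completeBipartiteGraph (Fin 2) (Fin (T.ncard))) := by
  classical
  have memT : ∀ u : V, u ∉ S → u ∈ T := fun u hu => (mem2 hpart u).resolve_left hu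
  have hcS : Fintype.card ↥S = 2 := by
    rw [← Nat.card_eq_fintype_card, Nat.card_coe_set_eq]; exact hS2
  have hcT : Fintype.card ↥T = T.ncard := by
    rw [← Nat.card_eq_fintype_card, Nat.card_coe_set_eq]
  have e2 : ↥S ≃ Fin 2 := Fintype.equivFinOfCardEq hcS
  have e3 : ↥T ≃ Fin (T.ncard) := Fintype.equivFinOfCardEq hcT
  refine ⟨⟨⟨fun u => if h : u ∈ S then Sum.inl (e2 ⟨u, h⟩) else Sum.inr (e3 ⟨u, memT u h⟩),
      fun z => Sum.elim (fun i => ((e2.symm i : ↥S) : V)) (fun j => ((e3.symm j : ↥T) : V)) z,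
      ?_, ?_⟩, ?_⟩⟩
  · intro u
    by_cases h : u ∈ S
    · simp [h]
    · simp [h]
  · intro z
    cases z with
    | inl i =>
      have hm : ((e2.symm i : ↥S) : V) ∈ S := (e2.symm i).2
      simp [hm, Subtype.coe_eta]
    | inr j =>
      have hm : ((e3.symm j : ↥T) : V) ∉ S :=
        Set.disjoint_right.mp hdisj (e3.symm j).2
      simp [hm, Subtype.coe_eta]
  · intro a b
    by_cases ha : a ∈ S <;> by_cases hb : b ∈ S
    · simp only [Equiv.coe_fn_mk, dif_pos ha, dif_pos hb]
      exact iff_of_false (by simp) (noadj_same hdisj hbip ha hb)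
    · simp only [Equiv.coe_fn_mk, dif_pos ha, dif_neg hb]
      exact iff_of_true (by simp) (hcomp a ha b (memT b hb))
    · simp only [Equiv.coe_fn_mk, dif_neg ha, dif_pos hb]
      exact iff_of_true (by simp) ((hcomp b hb a (memT a ha)).symm)
    · simp only [Equiv.coe_fn_mk, dif_neg ha, dif_neg hb]
      exact iff_of_false (by simp)
        (noadj_same hdisj.symm (bip_symm hbip) (memT a ha) (memT b hb))

end Case2m
section Case33
open MBD

variable {V : Type*} [Fintype V] {G : SimpleGraph V} {S T : Set V}

lemma two_le_ncard_of_pair {X : Set V} {p q : V} (hpq : p ≠ q) (hp : p ∈ X) (hq : q ∈ X) :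
    2 ≤ X.ncard := by
  have hsub : ({p, q} : Set V) ⊆ X := by
    intro z hz
    rcases hz with h | h
    · exact h ▸ hp
    · exact (show z = q from h) ▸ hq
  have := Set.ncard_le_ncard hsub (Set.toFinite _)
  rwa [Set.ncard_pair hpq] at this

lemma exists_not_mem_of_lt {X Y : Set V} (h : Y.ncard < X.ncard) : ∃ z ∈ X, z ∉ Y := by
  apply Set.not_subset.mp
  intro hsub
  have := Set.ncard_le_ncard hsub (Set.toFinite _)
  omega

lemma rich_two (hpart : S ∪ T = Set.univ) (hdisj : Disjoint S T)
    (hbip : ∀ u v, G.Adj u v → (u ∈ S ∧ v ∈ T) ∨ (u ∈ T ∧ v ∈ S))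
    (hS3 : 3 ≤ S.ncard) (hT3 : 3 ≤ T.ncard) (hC : Cond G) (hne : Nonempty V) :
    2 ≤ {x | x ∈ S ∧ ∀ y ∈ T, G.Adj x y}.ncard ∧
      2 ≤ {x | x ∈ T ∧ ∀ y ∈ S, G.Adj x y}.ncard := by
  set A := {x | x ∈ S ∧ ∀ y ∈ T, G.Adj x y} with hA
  set B := {x | x ∈ T ∧ ∀ y ∈ S, G.Adj x y} with hB
  have rich : ∀ w : V, ∃ v, v ≠ w ∧
      ((v ∈ A ∧ ∃ p q, p ≠ q ∧ p ∈ B ∧ q ∈ B) ∨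
       (v ∈ B ∧ ∃ p q, p ≠ q ∧ p ∈ A ∧ q ∈ A)) := by
    intro w
    obtain ⟨v, hvw, p, q, hpq, hpv, hpw, hqv, hqw, hdp, hdq⟩ := hC w
    rcases mem2 hpart v with hv | hv
    · have h := rich_struct hpart hdisj hbip hS3 hT3 hv hpq hdp hdq
      exact ⟨v, hvw, Or.inl ⟨⟨hv, h.1⟩, p, q, hpq,
        ⟨h.2.1, h.2.2.2.1⟩, ⟨h.2.2.1, h.2.2.2.2⟩⟩⟩
    · have hpart' : T ∪ S = Set.univ := by rw [Set.union_comm]; exact hpart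
      have h := rich_struct hpart' hdisj.symm (bip_symm hbip) hT3 hS3 hv hpq hdp hdq
      exact ⟨v, hvw, Or.inr ⟨⟨hv, h.1⟩, p, q, hpq,
        ⟨h.2.1, h.2.2.2.1⟩, ⟨h.2.2.1, h.2.2.2.2⟩⟩⟩
  obtain ⟨v1, _, h1⟩ := rich hne.some
  obtain ⟨v2, hv21, h2⟩ := rich v1
  have hAB_disj : ∀ x, x ∈ A → x ∈ B → False := by
    intro x hxA hxB
    exact Set.disjoint_left.mp hdisj hxA.1 hxB.1
  rcases h1 with ⟨hv1A, p, q, hpq, hpB, hqB⟩ | ⟨hv1B, p, q, hpq, hpA, hqA⟩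
  · refine ⟨?_, two_le_ncard_of_pair hpq hpB hqB⟩
    rcases h2 with ⟨hv2A, _⟩ | ⟨_, p', q', hpq', hpA', hqA'⟩
    · exact two_le_ncard_of_pair hv21 hv2A hv1A
    · exact two_le_ncard_of_pair hpq' hpA' hqA'
  · refine ⟨two_le_ncard_of_pair hpq hpA hqA, ?_⟩
    rcases h2 with ⟨_, p', q', hpq', hpB', hqB'⟩ | ⟨hv2B, _⟩
    · exact two_le_ncard_of_pair hpq' hpB' hqB'
    · exact two_le_ncard_of_pair hv21 hv2B hv1B

lemma A_le_two (hpart : S ∪ T = Set.univ) (hdisj : Disjoint S T)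
    (hbip : ∀ u v, G.Adj u v → (u ∈ S ∧ v ∈ T) ∨ (u ∈ T ∧ v ∈ S))
    (hT3 : 3 ≤ T.ncard)
    (hcrit2 : ∀ x y : V, G.Adj x y → ¬ Cond (G.deleteEdges {s(x, y)}))
    (hB2 : 2 ≤ {x | x ∈ T ∧ ∀ y ∈ S, G.Adj x y}.ncard) :
    {x | x ∈ S ∧ ∀ y ∈ T, G.Adj x y}.ncard ≤ 2 := by
  set A := {x | x ∈ S ∧ ∀ y ∈ T, G.Adj x y} with hA
  set B := {x | x ∈ T ∧ ∀ y ∈ S, G.Adj x y} with hB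
  have hBT : B ⊆ T := fun x hx => hx.1
  have hAS : A ⊆ S := fun x hx => hx.1
  by_contra hcon
  push_neg at hcon
  -- get three elements of A
  obtain ⟨a1, ha1⟩ := Set.nonempty_of_ncard_ne_zero (by omega : A.ncard ≠ 0)
  obtain ⟨a2, ha2, ha2'⟩ := exists_not_mem_of_lt
    (show ({a1} : Set V).ncard < A.ncard by rw [Set.ncard_singleton]; omega)
  obtain ⟨a3, ha3, ha3'⟩ := exists_not_mem_of_lt
    (show ({a1, a2} : Set V).ncard < A.ncard by
      calc ({a1, a2} : Set V).ncard ≤ 2 := (Set.ncard_insert_le _ _).trans (by simp)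
      _ < A.ncard := by omega)
  have ha21 : a2 ≠ a1 := by simpa using ha2'
  simp only [Set.mem_insert_iff, Set.mem_singleton_iff, not_or] at ha3'
  obtain ⟨b1, hb1⟩ := Set.nonempty_of_ncard_ne_zero (by omega : B.ncard ≠ 0)
  obtain ⟨b2, hb2, hb2'⟩ := exists_not_mem_of_lt
    (show ({b1} : Set V).ncard < B.ncard by rw [Set.ncard_singleton]; omega)
  have hb21 : b2 ≠ b1 := by simpa using hb2'
  have hne_cross : ∀ x y : V, x ∈ S → y ∈ T → x ≠ y := by
    intro x y hx hy h
    exact Set.disjoint_left.mp hdisj hx (h ▸ hy)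
  by_cases hTB : ∃ y ∈ T, y ∉ B
  · obtain ⟨y, hyT, hyB⟩ := hTB
    have hadj : G.Adj a1 y := ha1.2 y hyT
    refine hcrit2 a1 y hadj ?_
    refine cond_of_four (x1 := a2) (x2 := a3) (y1 := b1) (y2 := b2)
      (fun h => ha3'.2 h.symm) hb21.symm
      (hne_cross _ _ (hAS ha2) (hBT hb1)) (hne_cross _ _ (hAS ha2) (hBT hb2))
      (hne_cross _ _ (hAS ha3) (hBT hb1)) (hne_cross _ _ (hAS ha3) (hBT hb2))
      ?_ ?_ ?_ ?_
    · exact dom_AB_del hpart ha2.2 hb1.2 ha21 (hne_cross _ _ (hAS ha2) hyT)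
        (hne_cross _ _ ha1.1 (hBT hb1)).symm (fun h => hyB (h ▸ hb1))
    · exact dom_AB_del hpart ha2.2 hb2.2 ha21 (hne_cross _ _ (hAS ha2) hyT)
        (hne_cross _ _ ha1.1 (hBT hb2)).symm (fun h => hyB (h ▸ hb2))
    · exact dom_AB_del hpart ha3.2 hb1.2 ha3'.1 (hne_cross _ _ (hAS ha3) hyT)
        (hne_cross _ _ ha1.1 (hBT hb1)).symm (fun h => hyB (h ▸ hb1))
    · exact dom_AB_del hpart ha3.2 hb2.2 ha3'.1 (hne_cross _ _ (hAS ha3) hyT)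
        (hne_cross _ _ ha1.1 (hBT hb2)).symm (fun h => hyB (h ▸ hb2))
  · push_neg at hTB
    -- T ⊆ B, so get third element b3 of T in B
    obtain ⟨b3, hb3T, hb3'⟩ := exists_not_mem_of_lt
      (show ({b1, b2} : Set V).ncard < T.ncard by
        calc ({b1, b2} : Set V).ncard ≤ 2 := (Set.ncard_insert_le _ _).trans (by simp)
        _ < T.ncard := by omega)
    have hb3 : b3 ∈ B := hTB b3 hb3T
    simp only [Set.mem_insert_iff, Set.mem_singleton_iff, not_or] at hb3'
    have hadj : G.Adj a1 b1 := ha1.2 b1 (hBT hb1)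
    refine hcrit2 a1 b1 hadj ?_
    refine cond_of_four (x1 := a2) (x2 := a3) (y1 := b2) (y2 := b3)
      (fun h => ha3'.2 h.symm) (fun h => hb3'.2 h.symm)
      (hne_cross _ _ (hAS ha2) (hBT hb2)) (hne_cross _ _ (hAS ha2) (hBT hb3))
      (hne_cross _ _ (hAS ha3) (hBT hb2)) (hne_cross _ _ (hAS ha3) (hBT hb3))
      ?_ ?_ ?_ ?_
    · exact dom_AB_del hpart ha2.2 hb2.2 ha21 (hne_cross _ _ (hAS ha2) (hBT hb1))
        (hne_cross _ _ ha1.1 (hBT hb2)).symm hb21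
    · exact dom_AB_del hpart ha2.2 hb3.2 ha21 (hne_cross _ _ (hAS ha2) (hBT hb1))
        (hne_cross _ _ ha1.1 (hBT hb3)).symm hb3'.1
    · exact dom_AB_del hpart ha3.2 hb2.2 ha3'.1 (hne_cross _ _ (hAS ha3) (hBT hb1))
        (hne_cross _ _ ha1.1 (hBT hb2)).symm hb21
    · exact dom_AB_del hpart ha3.2 hb3.2 ha3'.1 (hne_cross _ _ (hAS ha3) (hBT hb1))
        (hne_cross _ _ ha1.1 (hBT hb3)).symm hb3'.1

lemma nbrs_in_B (hpart : S ∪ T = Set.univ) (hdisj : Disjoint S T)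
    (hbip : ∀ u v, G.Adj u v → (u ∈ S ∧ v ∈ T) ∨ (u ∈ T ∧ v ∈ S))
    (hcrit2 : ∀ x y : V, G.Adj x y → ¬ Cond (G.deleteEdges {s(x, y)}))
    (hA2 : 2 ≤ {x | x ∈ S ∧ ∀ y ∈ T, G.Adj x y}.ncard)
    (hB2 : 2 ≤ {x | x ∈ T ∧ ∀ y ∈ S, G.Adj x y}.ncard)
    {v : V} (hvS : v ∈ S) (hvA : v ∉ {x | x ∈ S ∧ ∀ y ∈ T, G.Adj x y}) :
    G.neighborSet v = {x | x ∈ T ∧ ∀ y ∈ S, G.Adj x y} := by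
  set A := {x | x ∈ S ∧ ∀ y ∈ T, G.Adj x y} with hA
  set B := {x | x ∈ T ∧ ∀ y ∈ S, G.Adj x y} with hB
  have hBT : B ⊆ T := fun x hx => hx.1
  have hAS : A ⊆ S := fun x hx => hx.1
  have hne_cross : ∀ x y : V, x ∈ S → y ∈ T → x ≠ y := by
    intro x y hx hy h
    exact Set.disjoint_left.mp hdisj hx (h ▸ hy)
  obtain ⟨a1, ha1⟩ := Set.nonempty_of_ncard_ne_zero (by omega : A.ncard ≠ 0)
  obtain ⟨a2, ha2, ha2'⟩ := exists_not_mem_of_lt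
    (show ({a1} : Set V).ncard < A.ncard by rw [Set.ncard_singleton]; omega)
  have ha21 : a2 ≠ a1 := by simpa using ha2'
  obtain ⟨b1, hb1⟩ := Set.nonempty_of_ncard_ne_zero (by omega : B.ncard ≠ 0)
  obtain ⟨b2, hb2, hb2'⟩ := exists_not_mem_of_lt
    (show ({b1} : Set V).ncard < B.ncard by rw [Set.ncard_singleton]; omega)
  have hb21 : b2 ≠ b1 := by simpa using hb2'
  ext u
  simp only [SimpleGraph.mem_neighborSet]
  constructor
  · intro hadj
    have huT : u ∈ T := adj_memT hdisj hbip hvS hadj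
    by_contra huB
    refine hcrit2 v u hadj ?_
    refine cond_of_four (x1 := a1) (x2 := a2) (y1 := b1) (y2 := b2)
      ha21.symm hb21.symm
      (hne_cross _ _ (hAS ha1) (hBT hb1)) (hne_cross _ _ (hAS ha1) (hBT hb2))
      (hne_cross _ _ (hAS ha2) (hBT hb1)) (hne_cross _ _ (hAS ha2) (hBT hb2))
      ?_ ?_ ?_ ?_
    · exact dom_AB_del hpart ha1.2 hb1.2 (fun h => hvA (h ▸ ha1))
        (hne_cross _ _ (hAS ha1) huT) (hne_cross _ _ hvS (hBT hb1)).symm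
        (fun h => huB (h ▸ hb1))
    · exact dom_AB_del hpart ha1.2 hb2.2 (fun h => hvA (h ▸ ha1))
        (hne_cross _ _ (hAS ha1) huT) (hne_cross _ _ hvS (hBT hb2)).symm
        (fun h => huB (h ▸ hb2))
    · exact dom_AB_del hpart ha2.2 hb1.2 (fun h => hvA (h ▸ ha2))
        (hne_cross _ _ (hAS ha2) huT) (hne_cross _ _ hvS (hBT hb1)).symm
        (fun h => huB (h ▸ hb1))
    · exact dom_AB_del hpart ha2.2 hb2.2 (fun h => hvA (h ▸ ha2))
        (hne_cross _ _ (hAS ha2) huT) (hne_cross _ _ hvS (hBT hb2)).symm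
        (fun h => huB (h ▸ hb2))
  · intro huB
    exact (huB.2 v hvS).symm

end Case33
section Case22
open MBD

variable {V : Type*} [Fintype V] {G : SimpleGraph V}

lemma adj_del {c0 d0 x y : V} (h : G.Adj x y)
    (h1 : ¬(x = c0 ∧ y = d0)) (h2 : ¬(x = d0 ∧ y = c0)) :
    (G.deleteEdges {s(c0, d0)}).Adj x y := by
  rw [SimpleGraph.deleteEdges_adj]
  refine ⟨h, ?_⟩
  simp only [Set.mem_singleton_iff, Sym2.eq_iff, not_or]
  exact ⟨h1, h2⟩

lemma two2w {H : SimpleGraph V} {a b c d : V}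
    (hab : a ≠ b) (hcd : c ≠ d) (hac : a ≠ c) (had : a ≠ d) (hbc : b ≠ c) (hbd : b ≠ d)
    (cover : ∀ x : V, x = a ∨ x = b ∨ x = c ∨ x = d)
    (F : (H.Adj b d ∧ H.Adj a c) ∨ (H.Adj b c ∧ H.Adj a d)) :
    ∃ v, v ≠ a ∧ ∃ p q, p ≠ q ∧ p ≠ v ∧ p ≠ a ∧ q ≠ v ∧ q ≠ a ∧
      IsDomSet H {v, p} ∧ IsDomSet H {v, q} := by
  rcases F with ⟨h1, h2⟩ | ⟨h1, h2⟩
  · refine ⟨c, hac.symm, d, b, (fun h => hbd h.symm), hcd.symm, had.symm, hbc,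
      hab.symm, ?_, ?_⟩
    · intro z
      rcases cover z with h | h | h | h
      · exact Or.inr ⟨c, by simp, by rw [h]; exact h2.symm⟩
      · exact Or.inr ⟨d, by simp, by rw [h]; exact h1.symm⟩
      · exact Or.inl (by simp [h])
      · exact Or.inl (by simp [h])
    · intro z
      rcases cover z with h | h | h | h
      · exact Or.inr ⟨c, by simp, by rw [h]; exact h2.symm⟩
      · exact Or.inl (by simp [h])
      · exact Or.inl (by simp [h])
      · exact Or.inr ⟨b, by simp, by rw [h]; exact h1⟩
  · refine ⟨d, had.symm, c, b, (fun h => hbc h.symm), hcd, hac.symm, hbd,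
      hab.symm, ?_, ?_⟩
    · intro z
      rcases cover z with h | h | h | h
      · exact Or.inr ⟨d, by simp, by rw [h]; exact h2.symm⟩
      · exact Or.inr ⟨c, by simp, by rw [h]; exact h1.symm⟩
      · exact Or.inl (by simp [h])
      · exact Or.inl (by simp [h])
    · intro z
      rcases cover z with h | h | h | h
      · exact Or.inr ⟨d, by simp, by rw [h]; exact h2.symm⟩
      · exact Or.inl (by simp [h])
      · exact Or.inr ⟨b, by simp, by rw [h]; exact h1⟩
      · exact Or.inl (by simp [h])

lemma cond22 {H : SimpleGraph V} {a b c d : V}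
    (hab : a ≠ b) (hcd : c ≠ d) (hac : a ≠ c) (had : a ≠ d) (hbc : b ≠ c) (hbd : b ≠ d)
    (cover : ∀ x : V, x = a ∨ x = b ∨ x = c ∨ x = d)
    (ma : H.Adj a c ∨ H.Adj a d) (mb : H.Adj b c ∨ H.Adj b d)
    (mc : H.Adj a c ∨ H.Adj b c) (md : H.Adj a d ∨ H.Adj b d) : Cond H := by
  have F0 : (H.Adj b d ∧ H.Adj a c) ∨ (H.Adj b c ∧ H.Adj a d) := by
    clear cover; tauto
  intro w
  rcases cover w with h | h | h | h
  · rw [h]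
    exact two2w hab hcd hac had hbc hbd cover F0
  · rw [h]
    have cover' : ∀ x : V, x = b ∨ x = a ∨ x = c ∨ x = d := fun x =>
      (cover x).elim (fun h => Or.inr (Or.inl h))
        (fun h => h.elim Or.inl (fun h => Or.inr (Or.inr h)))
    have F' : (H.Adj a d ∧ H.Adj b c) ∨ (H.Adj a c ∧ H.Adj b d) :=
      F0.elim (fun ⟨x, y⟩ => Or.inr ⟨y, x⟩) (fun ⟨x, y⟩ => Or.inl ⟨y, x⟩)
    exact two2w hab.symm hcd hbc hbd hac had cover' F'
  · rw [h]
    have cover' : ∀ x : V, x = c ∨ x = d ∨ x = a ∨ x = b := fun x =>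
      (cover x).elim (fun h => Or.inr (Or.inr (Or.inl h)))
        (fun h => h.elim (fun h => Or.inr (Or.inr (Or.inr h)))
          (fun h => h.elim Or.inl (fun h => Or.inr (Or.inl h))))
    have F' : (H.Adj d b ∧ H.Adj c a) ∨ (H.Adj d a ∧ H.Adj c b) :=
      F0.elim (fun ⟨x, y⟩ => Or.inl ⟨x.symm, y.symm⟩)
        (fun ⟨x, y⟩ => Or.inr ⟨y.symm, x.symm⟩)
    exact two2w hcd hab hac.symm hbc.symm had.symm hbd.symm cover' F'
  · rw [h]
    have cover' : ∀ x : V, x = d ∨ x = c ∨ x = a ∨ x = b := fun x =>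
      (cover x).elim (fun h => Or.inr (Or.inr (Or.inl h)))
        (fun h => h.elim (fun h => Or.inr (Or.inr (Or.inr h)))
          (fun h => h.elim (fun h => Or.inr (Or.inl h)) Or.inl))
    have F' : (H.Adj c b ∧ H.Adj d a) ∨ (H.Adj c a ∧ H.Adj d b) :=
      F0.elim (fun ⟨x, y⟩ => Or.inr ⟨y.symm, x.symm⟩)
        (fun ⟨x, y⟩ => Or.inl ⟨x.symm, y.symm⟩)
    exact two2w hcd.symm hab had.symm hbd.symm hac.symm hbc.symm cover' F'

lemma case22 {S T : Set V} (hconn : G.Connected) (hpart : S ∪ T = Set.univ)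
    (hdisj : Disjoint S T)
    (hbip : ∀ u v, G.Adj u v → (u ∈ S ∧ v ∈ T) ∨ (u ∈ T ∧ v ∈ S))
    (hS2 : S.ncard = 2) (hT2 : T.ncard = 2)
    (hcrit2 : ∀ x y : V, G.Adj x y → ¬ Cond (G.deleteEdges {s(x, y)})) : False := by
  obtain ⟨a, b, hab, hSeq⟩ := Set.ncard_eq_two.mp hS2
  obtain ⟨c, d, hcd, hTeq⟩ := Set.ncard_eq_two.mp hT2
  have haS : a ∈ S := by rw [hSeq]; simp
  have hbS : b ∈ S := by rw [hSeq]; simp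
  have hcT : c ∈ T := by rw [hTeq]; simp
  have hdT : d ∈ T := by rw [hTeq]; simp
  have hac : a ≠ c := fun h => Set.disjoint_left.mp hdisj haS (h ▸ hcT)
  have had : a ≠ d := fun h => Set.disjoint_left.mp hdisj haS (h ▸ hdT)
  have hbc : b ≠ c := fun h => Set.disjoint_left.mp hdisj hbS (h ▸ hcT)
  have hbd : b ≠ d := fun h => Set.disjoint_left.mp hdisj hbS (h ▸ hdT)
  have cover : ∀ x : V, x = a ∨ x = b ∨ x = c ∨ x = d := by
    intro x
    rcases mem2 hpart x with h | h
    · rw [hSeq] at h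
      rcases h with h | h
      · exact Or.inl h
      · exact Or.inr (Or.inl h)
    · rw [hTeq] at h
      rcases h with h | h
      · exact Or.inr (Or.inr (Or.inl h))
      · exact Or.inr (Or.inr (Or.inr h))
  have nsab : ¬ G.Adj a b := noadj_same hdisj hbip haS hbS
  have nscd : ¬ G.Adj c d := noadj_same hdisj.symm (bip_symm hbip) hcT hdT
  have hc2 : 2 ≤ Fintype.card V := Fintype.one_lt_card_iff.mpr ⟨a, c, hac⟩
  have ma : G.Adj a c ∨ G.Adj a d := by
    obtain ⟨u, hu⟩ := exists_adj hconn hc2 a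
    have huT : u ∈ T := adj_memT hdisj hbip haS hu
    rw [hTeq] at huT
    rcases huT with h | h
    · exact Or.inl (h ▸ hu)
    · exact Or.inr ((show u = d from h) ▸ hu)
  have mb : G.Adj b c ∨ G.Adj b d := by
    obtain ⟨u, hu⟩ := exists_adj hconn hc2 b
    have huT : u ∈ T := adj_memT hdisj hbip hbS hu
    rw [hTeq] at huT
    rcases huT with h | h
    · exact Or.inl (h ▸ hu)
    · exact Or.inr ((show u = d from h) ▸ hu)
  have mc : G.Adj a c ∨ G.Adj b c := by
    obtain ⟨u, hu⟩ := exists_adj hconn hc2 c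
    have huS : u ∈ S := adj_memT hdisj.symm (bip_symm hbip) hcT hu
    rw [hSeq] at huS
    rcases huS with h | h
    · exact Or.inl (h ▸ hu).symm
    · exact Or.inr ((show u = b from h) ▸ hu).symm
  have md : G.Adj a d ∨ G.Adj b d := by
    obtain ⟨u, hu⟩ := exists_adj hconn hc2 d
    have huS : u ∈ S := adj_memT hdisj.symm (bip_symm hbip) hdT hu
    rw [hSeq] at huS
    rcases huS with h | h
    · exact Or.inl (h ▸ hu).symm
    · exact Or.inr ((show u = b from h) ▸ hu).symm
  by_cases hAC : G.Adj a c <;> by_cases hAD : G.Adj a d <;>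
    by_cases hBC : G.Adj b c <;> by_cases hBD : G.Adj b d
  -- TTTT
  · have ad' := adj_del (c0 := a) (d0 := c) hAD (fun h => hcd h.2.symm) (fun h => hac h.1)
    have bc' := adj_del (c0 := a) (d0 := c) hBC (fun h => hab h.1.symm) (fun h => hbc h.1)
    exact hcrit2 a c hAC (cond22 hab hcd hac had hbc hbd cover
      (Or.inr ad') (Or.inl bc') (Or.inr bc') (Or.inl ad'))
  -- TTTF
  · have ad' := adj_del (c0 := a) (d0 := c) hAD (fun h => hcd h.2.symm) (fun h => hac h.1)
    have bc' := adj_del (c0 := a) (d0 := c) hBC (fun h => hab h.1.symm) (fun h => hbc h.1)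
    exact hcrit2 a c hAC (cond22 hab hcd hac had hbc hbd cover
      (Or.inr ad') (Or.inl bc') (Or.inr bc') (Or.inl ad'))
  -- TTFT
  · have ac' := adj_del (c0 := a) (d0 := d) hAC (fun h => hcd h.2) (fun h => had h.1)
    have bd' := adj_del (c0 := a) (d0 := d) hBD (fun h => hab h.1.symm) (fun h => hbd h.1)
    exact hcrit2 a d hAD (cond22 hab hcd hac had hbc hbd cover
      (Or.inl ac') (Or.inr bd') (Or.inl ac') (Or.inr bd'))
  -- TTFF
  · rcases mb with h | h <;> contradiction
  -- TFTT
  · have ac' := adj_del (c0 := b) (d0 := c) hAC (fun h => hab h.1) (fun h => hac h.1)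
    have bd' := adj_del (c0 := b) (d0 := c) hBD (fun h => hcd h.2.symm) (fun h => hbc h.1)
    exact hcrit2 b c hBC (cond22 hab hcd hac had hbc hbd cover
      (Or.inl ac') (Or.inr bd') (Or.inl ac') (Or.inr bd'))
  -- TFTF
  · rcases md with h | h <;> contradiction
  -- TFFT : matching a-c, b-d
  · have hcl : ∀ x ∈ ({a, c} : Set V), ∀ y, G.Adj x y → y ∈ ({a, c} : Set V) := by
      intro x hx y hy
      rcases hx with hx | hx
      · subst hx
        rcases cover y with h | h | h | h
        · simp [h]
        · exact absurd (h ▸ hy) nsab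
        · simp [h]
        · exact absurd (h ▸ hy) hAD
      · have hx' : x = c := hx
        subst hx'
        rcases cover y with h | h | h | h
        · simp [h]
        · exact absurd (h ▸ hy).symm hBC
        · simp [h]
        · exact absurd (h ▸ hy) nscd
    obtain ⟨p⟩ := hconn.preconnected a b
    have hbm : b ∈ ({a, c} : Set V) := walk_closed hcl p (by simp)
    rcases hbm with h | h
    · exact hab h.symm
    · exact hbc h
  -- TFFF
  · rcases mb with h | h <;> contradiction
  -- FTTT
  · have ad' := adj_del (c0 := b) (d0 := d) hAD (fun h => hab h.1) (fun h => had h.1)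
    have bc' := adj_del (c0 := b) (d0 := d) hBC (fun h => hcd h.2) (fun h => hbd h.1)
    exact hcrit2 b d hBD (cond22 hab hcd hac had hbc hbd cover
      (Or.inr ad') (Or.inl bc') (Or.inr bc') (Or.inl ad'))
  -- FTTF : matching a-d, b-c
  · have hcl : ∀ x ∈ ({a, d} : Set V), ∀ y, G.Adj x y → y ∈ ({a, d} : Set V) := by
      intro x hx y hy
      rcases hx with hx | hx
      · subst hx
        rcases cover y with h | h | h | h
        · simp [h]
        · exact absurd (h ▸ hy) nsab
        · exact absurd (h ▸ hy) hAC
        · simp [h]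
      · have hx' : x = d := hx
        subst hx'
        rcases cover y with h | h | h | h
        · simp [h]
        · exact absurd (h ▸ hy).symm hBD
        · exact absurd (h ▸ hy).symm nscd
        · simp [h]
    obtain ⟨p⟩ := hconn.preconnected a b
    have hbm : b ∈ ({a, d} : Set V) := walk_closed hcl p (by simp)
    rcases hbm with h | h
    · exact hab h.symm
    · exact hbd h
  -- FTFT
  · rcases mc with h | h <;> contradiction
  -- FTFF
  · rcases mb with h | h <;> contradiction
  -- FFTT
  · rcases ma with h | h <;> contradiction
  -- FFTF
  · rcases ma with h | h <;> contradiction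
  -- FFFT
  · rcases ma with h | h <;> contradiction
  -- FFFF
  · rcases ma with h | h <;> contradiction

end Case22

/-- Let `G` be a connected bipartite graph with bipartition `V₁, V₂`.  If `G` is
`2`-`γ'_MB`-critical, then either `G` is isomorphic to `K_{2,m}` for some `m ≥ 3`, or
`|V₁| ≥ 3` and `|V₂| ≥ 3`, each `Vᵢ` contains exactly two bipartite dominating vertices
(vertices adjacent to every vertex of the opposite side), and every vertex of `G` other than
these four has degree exactly `2`. -/
theorem bipartite_two_gammaMB'_critical_structure {V : Type*} [Fintype V]
    (G : SimpleGraph V) [DecidableRel G.Adj] (hG : G.Connected) (V1 V2 : Set V)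
    (hpart : V1 ∪ V2 = Set.univ) (hdisj : Disjoint V1 V2)
    (hbip : ∀ u v, G.Adj u v → (u ∈ V1 ∧ v ∈ V2) ∨ (u ∈ V2 ∧ v ∈ V1))
    (h2 : gammaMB' G = 2)
    (hcrit : ∀ e ∈ G.edgeSet, gammaMB' G < gammaMB' (G.deleteEdges {e})) :
    (∃ m : ℕ, 3 ≤ m ∧ Nonempty (G ≃g completeBipartiteGraph (Fin 2) (Fin m))) ∨
      (3 ≤ V1.ncard ∧ 3 ≤ V2.ncard ∧
        {x | x ∈ V1 ∧ ∀ y ∈ V2, G.Adj x y}.ncard = 2 ∧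
        {x | x ∈ V2 ∧ ∀ y ∈ V1, G.Adj x y}.ncard = 2 ∧
        ∀ v, v ∉ {x | x ∈ V1 ∧ ∀ y ∈ V2, G.Adj x y} ∪ {x | x ∈ V2 ∧ ∀ y ∈ V1, G.Adj x y} →
          G.degree v = 2) := by
  classical
  obtain ⟨hwin, hno1⟩ := of_gamma_two h2
  have hne : Nonempty V := hG.nonempty
  have hbip' := bip_symm hbip
  have hpart' : V2 ∪ V1 = Set.univ := by rw [Set.union_comm]; exact hpart
  have hS2 : 2 ≤ V1.ncard := side_ge2 hG hpart hdisj hbip hwin hno1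
  have hT2 : 2 ≤ V2.ncard := side_ge2 hG hpart' hdisj.symm hbip' hwin hno1
  have hcard : 3 ≤ Fintype.card V := by
    have h1 : (Set.univ : Set V).ncard = V1.ncard + V2.ncard := by
      rw [← hpart, Set.ncard_union_eq hdisj (Set.toFinite _) (Set.toFinite _)]
    rw [Set.ncard_univ, Nat.card_eq_fintype_card] at h1
    omega
  have hnd : ∀ v : V, ¬ IsDomSet G {v} := no_single_dom hpart hdisj hbip hS2 hT2
  have hC : Cond G := dwins_to_cond hcard hnd hne hwin
  have hcrit2 : ∀ x y : V, G.Adj x y → ¬ Cond (G.deleteEdges {s(x, y)}) := by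
    intro x y hadj hC'
    have hle : gammaMB' (G.deleteEdges {s(x, y)}) ≤ 2 :=
      gamma_le_two (cond_to_dwins hne hcard hC')
    have hlt := hcrit s(x, y) ((SimpleGraph.mem_edgeSet G).mpr hadj)
    rw [h2] at hlt
    exact (not_le.mpr hlt) hle
  rcases eq_or_lt_of_le hS2 with h1 | h1
  · -- V1.ncard = 2
    have hS1 : V1.ncard = 2 := h1.symm
    rcases eq_or_lt_of_le hT2 with h2' | h2'
    · exact absurd (case22 hG hpart hdisj hbip hS1 h2'.symm hcrit2) id
    · have hT3 : 3 ≤ V2.ncard := h2'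
      have hcomp := complete_of_two hpart hdisj hbip hC hS1 hT3
      exact Or.inl ⟨V2.ncard, hT3, iso_complete hpart hdisj hbip hcomp hS1⟩
  · have hS3 : 3 ≤ V1.ncard := h1
    rcases eq_or_lt_of_le hT2 with h2' | h2'
    · -- V2.ncard = 2 : symmetric complete bipartite case
      have hT1 : V2.ncard = 2 := h2'.symm
      have hcomp := complete_of_two hpart' hdisj.symm hbip' hC hT1 hS3
      exact Or.inl ⟨V1.ncard, hS3, iso_complete hpart' hdisj.symm hbip' hcomp hT1⟩
    · have hT3 : 3 ≤ V2.ncard := h2'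
      have hAB := rich_two hpart hdisj hbip hS3 hT3 hC hne
      have hA2 : {x | x ∈ V1 ∧ ∀ y ∈ V2, G.Adj x y}.ncard ≤ 2 :=
        A_le_two hpart hdisj hbip hT3 hcrit2 hAB.2
      have hB2 : {x | x ∈ V2 ∧ ∀ y ∈ V1, G.Adj x y}.ncard ≤ 2 :=
        A_le_two hpart' hdisj.symm hbip' hS3 hcrit2 hAB.1
      refine Or.inr ⟨hS3, hT3, le_antisymm hA2 hAB.1, le_antisymm hB2 hAB.2, ?_⟩
      intro v hv
      rcases mem2 hpart v with hvS | hvT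
      · have hNB := nbrs_in_B hpart hdisj hbip hcrit2 hAB.1 hAB.2 hvS
          (fun h => hv (Set.mem_union_left _ h))
        have hBcard : {x | x ∈ V2 ∧ ∀ y ∈ V1, G.Adj x y}.ncard = 2 :=
          le_antisymm hB2 hAB.2
        have hset : ((G.neighborFinset v : Finset V) : Set V) =
            {x | x ∈ V2 ∧ ∀ y ∈ V1, G.Adj x y} := by
          rw [SimpleGraph.neighborFinset_def, Set.coe_toFinset]
          exact hNB
        have hc := Set.ncard_coe_finset (G.neighborFinset v)
        rw [hset, hBcard] at hc
        have hd : G.degree v = (G.neighborFinset v).card := rfl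
        omega
      · have hNB := nbrs_in_B hpart' hdisj.symm hbip' hcrit2 hAB.2 hAB.1 hvT
          (fun h => hv (Set.mem_union_right _ h))
        have hAcard : {x | x ∈ V1 ∧ ∀ y ∈ V2, G.Adj x y}.ncard = 2 :=
          le_antisymm hA2 hAB.1
        have hset : ((G.neighborFinset v : Finset V) : Set V) =
            {x | x ∈ V1 ∧ ∀ y ∈ V2, G.Adj x y} := by
          rw [SimpleGraph.neighborFinset_def, Set.coe_toFinset]
          exact hNB
        have hc := Set.ncard_coe_finset (G.neighborFinset v)
        rw [hset, hAcard] at hc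
        have hd : G.degree v = (G.neighborFinset v).card := rfl
        omega
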